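/- arXiv:1811.04040 — 4 statements merged into one kernel-verified Lean document; each statement's English description precedes it below -/
import Mathlib

section
/- Let n ≥ 2 be a natural number and fix two distinct indices i ≠ j in Fin n. Let A : ℝ → Matrix (Fin n) (Fin n) ℝ be a family of matrices such that every entry of A(h) other than the (i,j) and (j,i) entries is independent of h, and A(h)ᵢⱼ = A(h)ⱼᵢ = h. Then the function h ↦ det(A(h)) · ( (A(h)⁻¹)ᵢᵢ (A(h)⁻¹)ⱼⱼ − (A(h)⁻¹)ᵢⱼ (A(h)⁻¹)ⱼᵢ ) takes the same value at any two points h₁, h₂ at which A(h₁) and A(h₂) are invertible; in particular, whenever A(h) is invertible on an open interval, the derivative of this function with respect to h vanishes there. (Paper's Lemma 6: the combination |g|(g^{xx}g^{yy} − (g^{xy})²) built from the metric determinant and inverse-metric components does not depend on the fluctuation h_{xy}, since by Jacobi's identity det(A)·det of the 2×2 submatrix of A⁻¹ on rows/columns {i,j} equals the complementary minor of A, which contains no (i,j) or (j,i) entry.) -/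
open Matrix

/-- The determinant of the identity matrix with columns `i` and `j` replaced
by arbitrary columns `b` and `c` is the corresponding 2×2 minor. -/
lemma det_one_updateCol_two {n : ℕ} {i j : Fin n} (hij : i ≠ j)
    (b c : Fin n → ℝ) :
    (((1 : Matrix (Fin n) (Fin n) ℝ).updateCol i b).updateCol j c).det
      = b i * c j - c i * b j := by
  set M : Matrix (Fin n) (Fin n) ℝ := (1 : Matrix (Fin n) (Fin n) ℝ).updateCol i b with hM
  have hMdet : M.det = b i := by
    rw [← cramer_apply, cramer_one]; rfl
  have hterm : ∀ x : Fin n,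
      (M.updateCol j (fun k => if k = x then (1:ℝ) else 0)).det
        = if x = i then -(b j) else if x = j then b i else 0 := by
    intro x
    by_cases hxi : x = i
    · subst hxi
      have hrw : M.updateCol j (fun k => if k = x then (1:ℝ) else 0)
          = ((1 : Matrix (Fin n) (Fin n) ℝ).updateCol j b).submatrix id (Equiv.swap x j) := by
        ext k l
        by_cases hl : l = x
        · subst hl
          simp [M, Matrix.updateCol_apply, hij, Equiv.swap_apply_left]
        · by_cases hlj : l = j
          · subst hlj
            simp [Matrix.updateCol_apply, Equiv.swap_apply_right, Matrix.one_apply, hl, hij]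
          · simp [M, Matrix.updateCol_apply, hl, hlj,
              Equiv.swap_apply_of_ne_of_ne hl hlj]
      rw [hrw, Matrix.det_permute', Equiv.Perm.sign_swap hij]
      have : ((1 : Matrix (Fin n) (Fin n) ℝ).updateCol j b).det = b j := by
        rw [← cramer_apply, cramer_one]; rfl
      rw [this]
      simp
    · by_cases hxj : x = j
      · subst hxj
        have hrw : M.updateCol x (fun k => if k = x then (1:ℝ) else 0) = M := by
          have : (fun k => if k = x then (1:ℝ) else 0) = fun k => M k x := by
            funext k
            simp [M, Matrix.updateCol_apply, (Ne.symm hij), Matrix.one_apply]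
          rw [this, Matrix.updateCol_eq_self]
        rw [hrw, hMdet]
        simp [hij, Ne.symm hij]
      · have : (M.updateCol j (fun k => if k = x then (1:ℝ) else 0)).det = 0 := by
          apply Matrix.det_zero_of_column_eq (show x ≠ j from hxj)
          intro k
          simp [M, Matrix.updateCol_apply, hxj, hxi, Matrix.one_apply]
        rw [this]
        simp [hxi, hxj]
  have h1 : (M.updateCol j c).det = cramer M c j := (cramer_apply _ _ _).symm
  have h2 : c = fun k => ∑ x : Fin n, (c x) • (fun m => if m = x then (1:ℝ) else 0) k := by
    funext k
    simp [Finset.sum_ite_eq]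
  rw [h1]
  conv_lhs => rw [h2]
  have h3 : cramer M (fun k => ∑ x : Fin n, (c x) • (fun m => if m = x then (1:ℝ) else 0) k) j
      = ∑ x : Fin n, c x * cramer M (fun m => if m = x then (1:ℝ) else 0) j := by
    rw [← sum_cramer_apply]
    congr 1
    funext x
    have := (cramer M).map_smul (c x) (fun m => if m = x then (1:ℝ) else 0)
    calc cramer M (fun k => (c x) • (fun m => if m = x then (1:ℝ) else 0) k) j
        = cramer M ((c x) • (fun m => if m = x then (1:ℝ) else 0)) j := rfl
      _ = ((c x) • cramer M (fun m => if m = x then (1:ℝ) else 0)) j := by rw [this]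
      _ = c x * cramer M (fun m => if m = x then (1:ℝ) else 0) j := rfl
  rw [h3]
  have h4 : ∀ x : Fin n, c x * cramer M (fun m => if m = x then (1:ℝ) else 0) j
      = (if x = i then -(c i * b j) else 0) + (if x = j then b i * c j else 0) := by
    intro x
    rw [cramer_apply, hterm x]
    by_cases hxi : x = i
    · subst hxi; simp [hij]; try ring
    · by_cases hxj : x = j
      · subst hxj; simp [hxi]; try ring
      · simp [hxi, hxj]
  simp_rw [h4, Finset.sum_add_distrib, Finset.sum_ite_eq' Finset.univ, Finset.mem_univ, if_true]
  ring

/-- For invertible `A`, the quantity equals the determinant of `A` with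
columns `i`, `j` replaced by basis vectors — a matrix with no `(i,j)`/`(j,i)` entry. -/
lemma key {n : ℕ} {i j : Fin n} (hij : i ≠ j) (A : Matrix (Fin n) (Fin n) ℝ)
    (hA : IsUnit A.det) :
    A.det * (A⁻¹ i i * A⁻¹ j j - A⁻¹ i j * A⁻¹ j i)
      = (Matrix.of fun k l => if l = i then (if k = i then (1:ℝ) else 0)
          else if l = j then (if k = j then 1 else 0) else A k l).det := by
  set B := A⁻¹ with hB
  set Q : Matrix (Fin n) (Fin n) ℝ :=
    ((1 : Matrix (Fin n) (Fin n) ℝ).updateCol i (fun k => B k i)).updateCol j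
      (fun k => B k j) with hQ
  have hAB : A * B = 1 := A.mul_nonsing_inv hA
  have hN : (Matrix.of fun k l => if l = i then (if k = i then (1:ℝ) else 0)
      else if l = j then (if k = j then 1 else 0) else A k l) = A * Q := by
    ext k l
    rw [Matrix.mul_apply]
    by_cases hli : l = i
    · subst hli
      have : ∀ m, Q m l = B m l := by
        intro m; simp [hQ, Matrix.updateCol_apply, hij, Ne.symm hij]
      simp_rw [this]
      have : ∑ m, A k m * B m l = (A * B) k l := (Matrix.mul_apply).symm
      rw [this, hAB]
      simp [Matrix.one_apply]
    · by_cases hlj : l = j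
      · subst hlj
        have : ∀ m, Q m l = B m l := by
          intro m; simp [hQ, Matrix.updateCol_apply]
        simp_rw [this]
        have : ∑ m, A k m * B m l = (A * B) k l := (Matrix.mul_apply).symm
        rw [this, hAB]
        simp [Matrix.one_apply, hli]
      · have : ∀ m, Q m l = (1 : Matrix (Fin n) (Fin n) ℝ) m l := by
          intro m; simp [hQ, Matrix.updateCol_apply, hli, hlj]
        simp_rw [this]
        have : ∑ m, A k m * (1 : Matrix (Fin n) (Fin n) ℝ) m l
            = (A * (1 : Matrix (Fin n) (Fin n) ℝ)) k l := (Matrix.mul_apply).symm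
        rw [this, Matrix.mul_one]
        simp [hli, hlj]
  have hQdet : Q.det = B i i * B j j - B i j * B j i :=
    det_one_updateCol_two hij _ _
  rw [hN, Matrix.det_mul, hQdet]

/-- Paper's Lemma 6: the combination `det(A) · ((A⁻¹)ᵢᵢ(A⁻¹)ⱼⱼ − (A⁻¹)ᵢⱼ(A⁻¹)ⱼᵢ)`
does not depend on the parameter `h` entering only the symmetric off-diagonal
entries `(i,j)` and `(j,i)`; in particular its derivative vanishes wherever the
matrix is invertible on an open interval. -/
theorem stmt_2 (n : ℕ) (hn : 2 ≤ n) (i j : Fin n) (hij : i ≠ j)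
    (A : ℝ → Matrix (Fin n) (Fin n) ℝ)
    (hconst : ∀ h h' : ℝ, ∀ k l : Fin n,
      ¬(k = i ∧ l = j) → ¬(k = j ∧ l = i) → A h k l = A h' k l)
    (hentry : ∀ h : ℝ, A h i j = h ∧ A h j i = h) :
    (∀ h₁ h₂ : ℝ, IsUnit (A h₁).det → IsUnit (A h₂).det →
      (A h₁).det * ((A h₁)⁻¹ i i * (A h₁)⁻¹ j j - (A h₁)⁻¹ i j * (A h₁)⁻¹ j i)
        = (A h₂).det * ((A h₂)⁻¹ i i * (A h₂)⁻¹ j j - (A h₂)⁻¹ i j * (A h₂)⁻¹ j i)) ∧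
    (∀ a b : ℝ, (∀ h ∈ Set.Ioo a b, IsUnit (A h).det) →
      ∀ h ∈ Set.Ioo a b,
        deriv (fun t =>
          (A t).det * ((A t)⁻¹ i i * (A t)⁻¹ j j - (A t)⁻¹ i j * (A t)⁻¹ j i)) h = 0) := by
  have main : ∀ h₁ h₂ : ℝ, IsUnit (A h₁).det → IsUnit (A h₂).det →
      (A h₁).det * ((A h₁)⁻¹ i i * (A h₁)⁻¹ j j - (A h₁)⁻¹ i j * (A h₁)⁻¹ j i)
        = (A h₂).det * ((A h₂)⁻¹ i i * (A h₂)⁻¹ j j - (A h₂)⁻¹ i j * (A h₂)⁻¹ j i) := by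
    intro h₁ h₂ hu₁ hu₂
    rw [key hij _ hu₁, key hij _ hu₂]
    congr 1
    ext k l
    simp only [Matrix.of_apply]
    by_cases hli : l = i
    · simp [hli]
    · by_cases hlj : l = j
      · simp [hli, hlj]
      · simp only [hli, hlj, if_false]
        exact hconst h₁ h₂ k l (fun h => hlj h.2) (fun h => hli h.2)
  refine ⟨main, ?_⟩
  intro a b hb h hh
  have hev : (fun t => (A t).det *
        ((A t)⁻¹ i i * (A t)⁻¹ j j - (A t)⁻¹ i j * (A t)⁻¹ j i))
      =ᶠ[nhds h] fun _ => (A h).det *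
        ((A h)⁻¹ i i * (A h)⁻¹ j j - (A h)⁻¹ i j * (A h)⁻¹ j i) := by
    filter_upwards [isOpen_Ioo.mem_nhds hh] with t ht
    exact main t h (hb t ht) (hb h hh)
  rw [hev.deriv_eq, deriv_const]
end

section
/- Let b, l₀, u₁ ∈ ℝ with l₀ ≠ 0 and u₁ ≠ 0. Suppose U, V, W, L : ℝ → ℝ are twice differentiable at u = 1 and satisfy U(1) = 0, V(1) = 0, W(1) = 0, L(1) = l₀, U'(1) = −u₁, and the magnetic black brane equations E₁ = E₂ = E₃ = E₄ = E₅ = 0 at u = 1. Then V'(1) = (b²l₀¹² + b²l₀⁴ − 6)/(6 l₀¹⁰ u₁); equivalently, the coefficient v₁ of (1−u) in the near-horizon expansion V(u) = v₁(1−u) + O((1−u)²) equals v₁ = −(b²l₀¹² + b²l₀⁴ − 6)/(6 l₀¹⁰ u₁). -/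
open Real

/-- First magnetic black brane equation of motion (evaluated at `u`). -/
noncomputable def E1 (b : ℝ) (U V W L : ℝ → ℝ) (u : ℝ) : ℝ :=
  b ^ 2 * (L u) ^ 12 + 2 * b ^ 2 * (L u) ^ 4
    + 30 * (L u) ^ 8 * Real.exp (4 * V u) * (4 * u ^ 3 * U u * (deriv L u) ^ 2 - 1)
    + 30 * u ^ 2 * (L u) ^ 9 * Real.exp (4 * V u) *
      (u * deriv L u * deriv U u + U u * (2 * u * deriv (deriv L) u
        + deriv L u * (4 * u * deriv V u + 2 * u * deriv W u + 3)))
    + 6 * u ^ 2 * (L u) ^ 10 * Real.exp (4 * V u) *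
      (u * deriv U u * (2 * deriv V u + deriv W u)
        + U u * (4 * u * deriv (deriv V) u + deriv V u * (4 * u * deriv W u + 6)
          + 6 * u * (deriv V u) ^ 2 + 2 * u * deriv (deriv W) u
          + 2 * u * (deriv W u) ^ 2 + 3 * deriv W u))
    + 12 * Real.exp (4 * V u)

/-- Second magnetic black brane equation of motion (evaluated at `u`). -/
noncomputable def E2 (b : ℝ) (U V W L : ℝ → ℝ) (u : ℝ) : ℝ :=
  b ^ 2 * (L u) ^ 12 + 2 * b ^ 2 * (L u) ^ 4
    + 30 * u ^ 3 * (L u) ^ 9 * Real.exp (4 * V u) * deriv L u *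
      (deriv U u + 2 * U u * (2 * deriv V u + deriv W u))
    + 30 * (L u) ^ 8 * Real.exp (4 * V u) * (4 * u ^ 3 * U u * (deriv L u) ^ 2 - 1)
    + 6 * u ^ 3 * (L u) ^ 10 * Real.exp (4 * V u) *
      (deriv U u * (2 * deriv V u + deriv W u)
        + 2 * U u * deriv V u * (deriv V u + 2 * deriv W u))
    + 12 * Real.exp (4 * V u)

/-- Third magnetic black brane equation of motion (evaluated at `u`). -/
noncomputable def E3 (b : ℝ) (U V W L : ℝ → ℝ) (u : ℝ) : ℝ :=
  7 * b ^ 2 * (L u) ^ 12 - 2 * b ^ 2 * (L u) ^ 4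
    + 90 * (L u) ^ 8 * Real.exp (4 * V u) * (4 * u ^ 3 * U u * (deriv L u) ^ 2 - 1)
    + 120 * u ^ 2 * (L u) ^ 9 * Real.exp (4 * V u) *
      (2 * u * deriv L u * deriv U u + U u * (2 * u * deriv (deriv L) u
        + deriv L u * (4 * u * deriv V u + 2 * u * deriv W u + 3)))
    + 15 * u ^ 2 * (L u) ^ 10 * Real.exp (4 * V u) *
      (2 * (u * deriv (deriv U) u
          + U u * (4 * u * deriv (deriv V) u + deriv V u * (4 * u * deriv W u + 6)
            + 6 * u * (deriv V u) ^ 2 + 2 * u * deriv (deriv W) u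
            + 2 * u * (deriv W u) ^ 2 + 3 * deriv W u))
        + deriv U u * (8 * u * deriv V u + 4 * u * deriv W u + 3))
    - 60 * Real.exp (4 * V u)

/-- Fourth magnetic black brane equation of motion (evaluated at `u`). -/
noncomputable def E4 (b : ℝ) (U V W L : ℝ → ℝ) (u : ℝ) : ℝ :=
  b ^ 2 * (L u) ^ 12 + 2 * b ^ 2 * (L u) ^ 4
    - 30 * (L u) ^ 8 * Real.exp (4 * V u) * (4 * u ^ 3 * U u * (deriv L u) ^ 2 - 1)
    - 30 * u ^ 2 * (L u) ^ 9 * Real.exp (4 * V u) *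
      (2 * u * deriv L u * deriv U u + U u * (2 * u * deriv (deriv L) u
        + deriv L u * (2 * u * deriv V u + 2 * u * deriv W u + 3)))
    - 3 * u ^ 2 * (L u) ^ 10 * Real.exp (4 * V u) *
      (2 * u * deriv (deriv U) u
        + deriv U u * (4 * u * deriv V u + 4 * u * deriv W u + 3)
        + U u * (4 * u * (deriv (deriv V) u + deriv (deriv W) u)
          + deriv V u * (4 * u * deriv W u + 6) + 4 * u * (deriv V u) ^ 2
          + 4 * u * (deriv W u) ^ 2 + 6 * deriv W u))
    - 12 * Real.exp (4 * V u)

/-- Fifth magnetic black brane equation of motion (evaluated at `u`). -/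
noncomputable def E5 (b : ℝ) (U V W L : ℝ → ℝ) (u : ℝ) : ℝ :=
  b ^ 2 * (L u) ^ 12 + 2 * b ^ 2 * (L u) ^ 4
    + 30 * (L u) ^ 8 * Real.exp (4 * V u) * (4 * u ^ 3 * U u * (deriv L u) ^ 2 - 1)
    + 30 * u ^ 2 * (L u) ^ 9 * Real.exp (4 * V u) *
      (2 * u * deriv L u * deriv U u + U u * (2 * u * deriv (deriv L) u
        + deriv L u * (4 * u * deriv V u + 3)))
    + 3 * u ^ 2 * (L u) ^ 10 * Real.exp (4 * V u) *
      (2 * (u * deriv (deriv U) u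
          + U u * (4 * u * deriv (deriv V) u + 6 * u * (deriv V u) ^ 2 + 6 * deriv V u))
        + deriv U u * (8 * u * deriv V u + 3))
    + 12 * Real.exp (4 * V u)

/-- Near-horizon expansion of the magnetic black brane: the coefficient
`v₁ = −V'(1)` is fixed by the equations of motion to
`v₁ = −(b²l₀¹² + b²l₀⁴ − 6)/(6 l₀¹⁰ u₁)`. -/
theorem stmt_3 (b l₀ u₁ : ℝ) (hl₀ : l₀ ≠ 0) (hu₁ : u₁ ≠ 0)
    (U V W L : ℝ → ℝ)
    (hU : DifferentiableAt ℝ U 1) (hU' : DifferentiableAt ℝ (deriv U) 1)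
    (hV : DifferentiableAt ℝ V 1) (hV' : DifferentiableAt ℝ (deriv V) 1)
    (hW : DifferentiableAt ℝ W 1) (hW' : DifferentiableAt ℝ (deriv W) 1)
    (hL : DifferentiableAt ℝ L 1) (hL' : DifferentiableAt ℝ (deriv L) 1)
    (hU1 : U 1 = 0) (hV1 : V 1 = 0) (hW1 : W 1 = 0) (hL1 : L 1 = l₀)
    (hU'1 : deriv U 1 = -u₁)
    (he1 : E1 b U V W L 1 = 0) (he2 : E2 b U V W L 1 = 0)
    (he3 : E3 b U V W L 1 = 0) (he4 : E4 b U V W L 1 = 0)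
    (he5 : E5 b U V W L 1 = 0) :
    deriv V 1 = (b ^ 2 * l₀ ^ 12 + b ^ 2 * l₀ ^ 4 - 6) / (6 * l₀ ^ 10 * u₁) := by
  simp only [E1, E3, E4, E5] at he1 he3 he4 he5
  rw [hU1, hV1, hL1, hU'1] at he1 he3 he4 he5
  simp only [mul_zero, zero_mul, Real.exp_zero, mul_one, one_pow, one_mul] at he1 he3 he4 he5
  have h6 : (6 : ℝ) * l₀ ^ 10 * u₁ ≠ 0 := by positivity
  rw [eq_div_iff h6]
  linear_combination (-1/8 : ℝ) * he1 + (-1/16 : ℝ) * he3 + (-3/8 : ℝ) * he4 + (-1/16 : ℝ) * he5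
end

section
/- Let b, l₀, u₁ ∈ ℝ with l₀ ≠ 0 and u₁ ≠ 0. Suppose U, V, W, L : ℝ → ℝ are twice differentiable at u = 1 and satisfy U(1) = 0, V(1) = 0, W(1) = 0, L(1) = l₀, U'(1) = −u₁, and the magnetic black brane equations E₁ = E₂ = E₃ = E₄ = E₅ = 0 at u = 1. Then W'(1) = −(b²l₀⁴ + 6)/(6 l₀¹⁰ u₁); equivalently, the coefficient w₁ of (1−u) in the near-horizon expansion W(u) = w₁(1−u) + O((1−u)²) equals w₁ = −(−b²l₀⁴ − 6)/(6 l₀¹⁰ u₁). -/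
open Real

/-- Near-horizon expansion of the magnetic black brane: the coefficient
`w₁ = −W'(1)` is fixed by the equations of motion to
`w₁ = −(−b²l₀⁴ − 6)/(6 l₀¹⁰ u₁)`, i.e. `W'(1) = −(b²l₀⁴ + 6)/(6 l₀¹⁰ u₁)`. -/
theorem stmt_4 (b l₀ u₁ : ℝ) (hl₀ : l₀ ≠ 0) (hu₁ : u₁ ≠ 0)
    (U V W L : ℝ → ℝ)
    (hU : DifferentiableAt ℝ U 1) (hU' : DifferentiableAt ℝ (deriv U) 1)
    (hV : DifferentiableAt ℝ V 1) (hV' : DifferentiableAt ℝ (deriv V) 1)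
    (hW : DifferentiableAt ℝ W 1) (hW' : DifferentiableAt ℝ (deriv W) 1)
    (hL : DifferentiableAt ℝ L 1) (hL' : DifferentiableAt ℝ (deriv L) 1)
    (hU1 : U 1 = 0) (hV1 : V 1 = 0) (hW1 : W 1 = 0) (hL1 : L 1 = l₀)
    (hU'1 : deriv U 1 = -u₁)
    (he1 : E1 b U V W L 1 = 0) (he2 : E2 b U V W L 1 = 0)
    (he3 : E3 b U V W L 1 = 0) (he4 : E4 b U V W L 1 = 0)
    (he5 : E5 b U V W L 1 = 0) :
    deriv W 1 = -(b ^ 2 * l₀ ^ 4 + 6) / (6 * l₀ ^ 10 * u₁) := by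
  simp only [E1, E3, E4, E5, hU1, hV1, hL1, hU'1] at he1 he3 he4 he5
  norm_num [Real.exp_zero] at he1 he3 he4 he5
  have key : 6 * l₀ ^ 10 * u₁ * deriv W 1 = -(b ^ 2 * l₀ ^ 4 + 6) := by
    linear_combination (2 * he1 + he3 - 2 * he4 - 7 * he5) * (-1/16)
  have h6 : (6 : ℝ) * l₀ ^ 10 * u₁ ≠ 0 := by positivity
  field_simp
  linarith [key]
end

section
/- Let b, l₀, u₁ ∈ ℝ with l₀ ≠ 0 and u₁ ≠ 0. Suppose U, V, W, L : ℝ → ℝ are twice differentiable at u = 1 and satisfy U(1) = 0, V(1) = 0, W(1) = 0, L(1) = l₀, U'(1) = −u₁, and the magnetic black brane equations E₁ = E₂ = E₃ = E₄ = E₅ = 0 at u = 1. Then L'(1) = (−b²l₀¹² + b²l₀⁴ − 30l₀⁸ + 30)/(30 l₀⁹ u₁); equivalently, the coefficient l₁ of (1−u) in the near-horizon expansion L(u) = l₀ + l₁(1−u) + O((1−u)²) equals l₁ = −(−b²l₀¹² + b²l₀⁴ − 30l₀⁸ + 30)/(30 l₀⁹ u₁). In particular, if l₀ = 1 then L'(1)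 = 0. -/
open Real

/-- Near-horizon expansion of the magnetic black brane: the coefficient
`l₁ = −L'(1)` is fixed by the equations of motion to
`l₁ = −(−b²l₀¹² + b²l₀⁴ − 30l₀⁸ + 30)/(30 l₀⁹ u₁)`; in particular `L'(1) = 0`
when `l₀ = 1`. -/
theorem stmt_5 (b l₀ u₁ : ℝ) (hl₀ : l₀ ≠ 0) (hu₁ : u₁ ≠ 0)
    (U V W L : ℝ → ℝ)
    (hU : DifferentiableAt ℝ U 1) (hU' : DifferentiableAt ℝ (deriv U) 1)
    (hV : DifferentiableAt ℝ V 1) (hV' : DifferentiableAt ℝ (deriv V) 1)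
    (hW : DifferentiableAt ℝ W 1) (hW' : DifferentiableAt ℝ (deriv W) 1)
    (hL : DifferentiableAt ℝ L 1) (hL' : DifferentiableAt ℝ (deriv L) 1)
    (hU1 : U 1 = 0) (hV1 : V 1 = 0) (hW1 : W 1 = 0) (hL1 : L 1 = l₀)
    (hU'1 : deriv U 1 = -u₁)
    (he1 : E1 b U V W L 1 = 0) (he2 : E2 b U V W L 1 = 0)
    (he3 : E3 b U V W L 1 = 0) (he4 : E4 b U V W L 1 = 0)
    (he5 : E5 b U V W L 1 = 0) :
    deriv L 1 = (-(b ^ 2) * l₀ ^ 12 + b ^ 2 * l₀ ^ 4 - 30 * l₀ ^ 8 + 30)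
        / (30 * l₀ ^ 9 * u₁) ∧
      (l₀ = 1 → deriv L 1 = 0) := by
  simp only [E1, E2, E3, E4, E5, hU1, hV1, hW1, hL1, hU'1] at he1 he2 he3 he4 he5
  norm_num [Real.exp_zero] at he1 he2 he3 he4 he5
  have key : deriv L 1 = (-(b ^ 2) * l₀ ^ 12 + b ^ 2 * l₀ ^ 4 - 30 * l₀ ^ 8 + 30)
      / (30 * l₀ ^ 9 * u₁) := by
    rw [eq_div_iff (by simp [pow_ne_zero, hl₀, hu₁])]
    linear_combination (-5/8 : ℝ) * he1 + (3/16 : ℝ) * he3 + (5/8 : ℝ) * he4 - (5/16 : ℝ) * he5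
  refine ⟨key, fun h => ?_⟩
  rw [key, h]
  norm_num
end
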